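/- Let d ≥ 1, m ∈ ℝ, k > 0, and let κ₂ : ℝ^d → ℝ satisfy κ₂(q) ≥ m² + ‖q‖² for all q. Then for every q ∈ ℝ^d: ∂_k r̄(q;k) / (κ₂(q) + r̄(q;k))² ≤ 2k / (m² + k²)². -/

import Mathlib

open Classical in
/-- The exponential regulator `r̄(q;k) = ‖q‖²/(exp(‖q‖²/k²) − 1)`, extended
continuously by `r̄(0;k) = k²`. -/
noncomputable def rbar (d : ℕ) (q : EuclideanSpace ℝ (Fin d)) (k : ℝ) : ℝ :=
  if q = 0 then k ^ 2 else ‖q‖ ^ 2 / (Real.exp (‖q‖ ^ 2 / k ^ 2) - 1)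

/-- Key inequality: `u e^{u/2} ≤ e^u - 1` for `u > 0`. -/
lemma key_sinh (u : ℝ) (hu : 0 < u) :
    u * Real.sqrt (Real.exp u) ≤ Real.exp u - 1 := by
  have h := (Real.self_lt_sinh_iff (x := u / 2)).mpr (by linarith)
  rw [Real.sinh_eq] at h
  have hs : Real.sqrt (Real.exp u) = Real.exp (u / 2) := by
    rw [← Real.exp_half]
  rw [hs]
  have he : Real.exp u = Real.exp (u / 2) * Real.exp (u / 2) := by
    rw [← Real.exp_add]; ring_nf
  have hp : 0 < Real.exp (u / 2) := Real.exp_pos _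
  have hneg : Real.exp (-(u / 2)) = 1 / Real.exp (u / 2) := by
    rw [Real.exp_neg]; exact (inv_eq_one_div _)
  rw [hneg] at h
  have h2 : u * Real.exp (u / 2) ≤ (Real.exp (u / 2) - 1 / Real.exp (u / 2)) * Real.exp (u / 2) := by
    nlinarith
  calc u * Real.exp (u / 2)
      ≤ (Real.exp (u / 2) - 1 / Real.exp (u / 2)) * Real.exp (u / 2) := h2
    _ = Real.exp u - 1 := by rw [he]; field_simp

theorem stmt_15 (d : ℕ) (hd : 1 ≤ d) (m k : ℝ) (hk : 0 < k)
    (κ₂ : EuclideanSpace ℝ (Fin d) → ℝ)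
    (hκ : ∀ q : EuclideanSpace ℝ (Fin d), m ^ 2 + ‖q‖ ^ 2 ≤ κ₂ q) :
    ∀ q : EuclideanSpace ℝ (Fin d),
      deriv (fun s => rbar d q s) k / (κ₂ q + rbar d q k) ^ 2
        ≤ 2 * k / (m ^ 2 + k ^ 2) ^ 2 := by
  intro q
  have hm2 : (0:ℝ) ≤ m ^ 2 := sq_nonneg m
  have hmk : 0 < m ^ 2 + k ^ 2 := by positivity
  by_cases hq : q = 0
  · subst hq
    have hfun : (fun s => rbar d 0 s) = fun s : ℝ => s ^ 2 := by
      funext s; simp [rbar]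
    have hderiv : deriv (fun s => rbar d 0 s) k = 2 * k := by
      rw [hfun]
      simp
    rw [hderiv]
    have hr : rbar d 0 k = k ^ 2 := by simp [rbar]
    rw [hr]
    have hκ0 : m ^ 2 ≤ κ₂ 0 := by simpa using hκ 0
    have hden : 0 < κ₂ 0 + k ^ 2 := by nlinarith
    apply div_le_div_of_nonneg_left (by positivity) (by positivity)
    nlinarith
  · -- q ≠ 0
    set a := ‖q‖ ^ 2 with ha
    have haq : 0 < a := by
      have : q ≠ 0 := hq
      have : 0 < ‖q‖ := norm_pos_iff.mpr this
      positivity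
    set u := a / k ^ 2 with hu
    have hu0 : 0 < u := by positivity
    set E := Real.exp u with hE
    have hE1 : 1 < E := by
      rw [hE]; exact Real.one_lt_exp_iff.mpr hu0
    have hEpos : (0:ℝ) < E - 1 := by linarith
    -- derivative computation
    have hfun : (fun s => rbar d q s) =ᶠ[nhds k] fun s : ℝ => a / (Real.exp (a / s ^ 2) - 1) := by
      filter_upwards with s
      simp [rbar, hq]
      rfl
    have hg : HasDerivAt (fun s : ℝ => Real.exp (a / s ^ 2) - 1)
        (Real.exp (a / k ^ 2) * (-2 * a / k ^ 3)) k := by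
      have h1 : HasDerivAt (fun s : ℝ => a / s ^ 2) (-2 * a / k ^ 3) k := by
        have h2 : HasDerivAt (fun s : ℝ => s ^ 2) (2 * k) k := by
          simpa using hasDerivAt_pow 2 k
        have h3 : HasDerivAt (fun s : ℝ => a / s ^ 2)
            ((0 * k ^ 2 - a * (2 * k)) / (k ^ 2) ^ 2) k :=
          (hasDerivAt_const k a).div h2 (by positivity)
        convert h3 using 1
        field_simp
        ring
      have := (Real.hasDerivAt_exp (a / k ^ 2)).comp k h1
      simpa using this.sub_const 1
    have hgne : Real.exp (a / k ^ 2) - 1 ≠ 0 := by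
      rw [← hu, ← hE]; linarith
    have hf : HasDerivAt (fun s : ℝ => a / (Real.exp (a / s ^ 2) - 1))
        (-(a * (Real.exp (a / k ^ 2) * (-2 * a / k ^ 3))) /
          (Real.exp (a / k ^ 2) - 1) ^ 2) k := by
      have := (hasDerivAt_const k a).div hg hgne
      exact this.congr_deriv (by ring)
    have hderiv : deriv (fun s => rbar d q s) k
        = 2 * a ^ 2 * E / (k ^ 3 * (E - 1) ^ 2) := by
      rw [Filter.EventuallyEq.deriv_eq hfun, hf.deriv]
      rw [← hu, ← hE]
      field_simp
    have hrbar : rbar d q k = a / (E - 1) := by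
      simp [rbar, hq, ← ha, ← hu, ← hE]
    rw [hderiv, hrbar]
    -- key quantities
    set s := Real.sqrt E with hsdef
    have hs2 : s ^ 2 = E := Real.sq_sqrt (by linarith)
    have hs1 : 1 ≤ s := by
      rw [hsdef]
      have := Real.one_le_sqrt (x := E) |>.mpr (le_of_lt hE1)
      exact this
    have hkey : a * s ≤ k ^ 2 * (E - 1) := by
      have := key_sinh u hu0
      rw [← hE, ← hsdef] at this
      have hueq : u * s ≤ E - 1 := this
      have : k ^ 2 * (u * s) ≤ k ^ 2 * (E - 1) :=
        mul_le_mul_of_nonneg_left hueq (by positivity)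
      calc a * s = k ^ 2 * (u * s) := by rw [hu]; field_simp
        _ ≤ k ^ 2 * (E - 1) := this
    -- B := a*s/(k^2*(E-1)) ≤ 1 and B*k^2 ≤ a + a/(E-1)
    have hκq : m ^ 2 + a ≤ κ₂ q := by rw [ha]; exact hκ q
    have hr : (0:ℝ) < a / (E - 1) := by positivity
    have hden : 0 < κ₂ q + a / (E - 1) := by nlinarith
    rw [div_le_div_iff₀ (by positivity) (by positivity)]
    -- reduce to: B*(m^2+k^2) ≤ κ₂ q + a/(E-1) with B = a*s/(k^2*(E-1))
    have hB3 : a * s / (k ^ 2 * (E - 1)) * (m ^ 2 + k ^ 2) ≤ κ₂ q + a / (E - 1) := by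
      have hBle : a * s / (k ^ 2 * (E - 1)) ≤ 1 :=
        (div_le_one (by positivity)).mpr hkey
      have h1 : a * s / (k ^ 2 * (E - 1)) * m ^ 2 ≤ m ^ 2 := by
        simpa using mul_le_mul_of_nonneg_right hBle hm2
      have h2 : a * s / (k ^ 2 * (E - 1)) * k ^ 2 ≤ a + a / (E - 1) := by
        have hsE : s ≤ E := by
          calc s = s * 1 := (mul_one s).symm
            _ ≤ s * s := mul_le_mul_of_nonneg_left hs1 (by linarith)
            _ = E := by rw [← hs2]; ring
        have he1 : a * s / (k ^ 2 * (E - 1)) * k ^ 2 = a * s / (E - 1) := by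
          field_simp
        rw [he1]
        have h4 : a + a / (E - 1) = a * E / (E - 1) := by
          field_simp; ring
        rw [h4]
        exact (div_le_div_iff_of_pos_right hEpos).mpr
          (mul_le_mul_of_nonneg_left hsE haq.le)
      have hring : a * s / (k ^ 2 * (E - 1)) * (m ^ 2 + k ^ 2)
          = a * s / (k ^ 2 * (E - 1)) * m ^ 2 + a * s / (k ^ 2 * (E - 1)) * k ^ 2 := by
        ring
      linarith
    have hB3nn : 0 ≤ a * s / (k ^ 2 * (E - 1)) * (m ^ 2 + k ^ 2) := by positivity
    have hsq : (a * s / (k ^ 2 * (E - 1)) * (m ^ 2 + k ^ 2)) ^ 2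
        ≤ (κ₂ q + a / (E - 1)) ^ 2 := by
      apply pow_le_pow_left₀ hB3nn hB3
    have heq : 2 * a ^ 2 * E / (k ^ 3 * (E - 1) ^ 2) * (m ^ 2 + k ^ 2) ^ 2
        = 2 * k * (a * s / (k ^ 2 * (E - 1)) * (m ^ 2 + k ^ 2)) ^ 2 := by
      have h5 : (a * s / (k ^ 2 * (E - 1)) * (m ^ 2 + k ^ 2)) ^ 2
          = a ^ 2 * E * (m ^ 2 + k ^ 2) ^ 2 / (k ^ 4 * (E - 1) ^ 2) := by
        rw [mul_pow, div_pow, mul_pow, mul_pow, hs2]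
        field_simp
      rw [h5]
      field_simp
    rw [heq]
    have := mul_le_mul_of_nonneg_left hsq (by positivity : (0:ℝ) ≤ 2 * k)
    linarith
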